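/- Let V be a finite-dimensional real vector space with complex structure J and basis {X₁, JX₁, ..., Xₙ, JXₙ}. Suppose A : V → V is linear, anti-commutes with J, and satisfies AXᵢ ∈ span{Xᵢ, JXᵢ} for each i, with A(Xᵢ + Xⱼ) ∈ span{Xᵢ + Xⱼ, J(Xᵢ + Xⱼ)} for all i, j, and A(JX₁ + X₂) ∈ span{JX₁ + X₂, J(JX₁ + X₂)} (when n ≥ 2). Then A = 0. -/

import Mathlib

theorem stmt14 {V : Type*} [AddCommGroup V] [Module ℝ V]
    (n : ℕ) (hn : 2 ≤ n) (J A : V →ₗ[ℝ] V)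
    (hJ2 : ∀ X, J (J X) = -X)
    (hAJ : ∀ X, A (J X) = -J (A X))
    (X : Fin n → V)
    (b : Module.Basis (Fin n ⊕ Fin n) ℝ V)
    (hbl : ∀ i, b (Sum.inl i) = X i)
    (hbr : ∀ i, b (Sum.inr i) = J (X i))
    (h1 : ∀ i, A (X i) ∈ Submodule.span ℝ {X i, J (X i)})
    (h2 : ∀ i j, A (X i + X j) ∈ Submodule.span ℝ {X i + X j, J (X i + X j)})
    (h3 : A (J (X ⟨0, by omega⟩) + X ⟨1, by omega⟩) ∈
      Submodule.span ℝ {J (X ⟨0, by omega⟩) + X ⟨1, by omega⟩,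
        J (J (X ⟨0, by omega⟩) + X ⟨1, by omega⟩)}) :
    A = 0 := by
  choose a c hac using fun i => Submodule.mem_span_pair.mp (h1 i)
  have pair : ∀ i j : Fin n, i ≠ j → a i = a j ∧ c i = c j := by
    intro i j hij
    obtain ⟨p, q, hpq⟩ := Submodule.mem_span_pair.mp (h2 i j)
    rw [map_add A, ← hac i, ← hac j, map_add J, smul_add, smul_add] at hpq
    have Hli := congrArg (fun v => b.repr v (Sum.inl i)) hpq
    have Hlj := congrArg (fun v => b.repr v (Sum.inl j)) hpq
    have Hri := congrArg (fun v => b.repr v (Sum.inr i)) hpq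
    have Hrj := congrArg (fun v => b.repr v (Sum.inr j)) hpq
    simp only [← hbr] at Hli Hlj Hri Hrj
    simp only [← hbl] at Hli Hlj Hri Hrj
    simp [Finsupp.single_apply, hij, hij.symm] at Hli Hlj Hri Hrj
    exact ⟨Hli ▸ Hlj, Hri ▸ Hrj⟩
  -- use h3
  obtain ⟨p, q, hpq⟩ := Submodule.mem_span_pair.mp h3
  set i0 : Fin n := ⟨0, by omega⟩
  set i1 : Fin n := ⟨1, by omega⟩
  have h01 : i0 ≠ i1 := by simp [i0, i1, Fin.ext_iff]
  rw [map_add A, hAJ, ← hac i0, ← hac i1] at hpq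
  simp only [map_add, map_smul, map_neg, hJ2, smul_neg, neg_add, neg_neg, smul_add] at hpq
  have Hl0 := congrArg (fun v => b.repr v (Sum.inl i0)) hpq
  have Hl1 := congrArg (fun v => b.repr v (Sum.inl i1)) hpq
  have Hr0 := congrArg (fun v => b.repr v (Sum.inr i0)) hpq
  have Hr1 := congrArg (fun v => b.repr v (Sum.inr i1)) hpq
  simp only [← hbr] at Hl0 Hl1 Hr0 Hr1
  simp only [← hbl] at Hl0 Hl1 Hr0 Hr1
  simp [Finsupp.single_apply, h01, h01.symm] at Hl0 Hl1 Hr0 Hr1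
  have ha01 := (pair i0 i1 h01).1
  have hc01 := (pair i0 i1 h01).2
  have ha0 : a i0 = 0 := by linarith
  have hc0 : c i0 = 0 := by linarith
  have hz : ∀ i, a i = 0 ∧ c i = 0 := by
    intro i
    by_cases hi : i = i0
    · exact ⟨hi ▸ ha0, hi ▸ hc0⟩
    · obtain ⟨h, h'⟩ := pair i i0 hi
      exact ⟨h.trans ha0, h'.trans hc0⟩
  have hAX : ∀ i, A (X i) = 0 := by
    intro i
    rw [← hac i, (hz i).1, (hz i).2, zero_smul, zero_smul, add_zero]
  refine b.ext ?_
  rintro (i | i)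
  · simp [hbl, hAX]
  · simp [hbr, hAJ, hAX]
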